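/- Suppose the families f_{ℓ,+}, g_{ℓ,+}, h_{ℓ,+} satisfy the '+'-half of the Ablowitz–Ladik recursion for (α, β) with constant c₀,₊, and set γ := 1 − αβ. Then there exists a constant c₁,₊ ∈ ℂ such that for all n ∈ ℤ: g_{1,+} = −c₀,₊ α⁺β + c₁,₊/2, f_{1,+} = c₀,₊(−γ⁺α⁺⁺ + (α⁺)²β) − c₁,₊ α⁺, and h_{1,+} = c₀,₊(γβ⁻ − α⁺β²) + c₁,₊ β. -/

import Mathlib

/-- The `+`-half of the Ablowitz–Ladik recursion for `(α, β)` with constant `c0p`. -/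
structure ALRecPlus (α β : ℤ → ℂ) (c0p : ℂ) (f g h : ℕ → ℤ → ℂ) : Prop where
  g0 : ∀ n : ℤ, g 0 n = c0p / 2
  f0 : ∀ n : ℤ, f 0 n = -(c0p * α (n + 1))
  h0 : ∀ n : ℤ, h 0 n = c0p * β n
  g_step : ∀ (ℓ : ℕ) (n : ℤ),
    g (ℓ + 1) n - g (ℓ + 1) (n - 1) = α n * h ℓ (n - 1) + β n * f ℓ n
  f_step : ∀ (ℓ : ℕ) (n : ℤ),
    f (ℓ + 1) (n - 1) = f ℓ n - α n * (g (ℓ + 1) n + g (ℓ + 1) (n - 1))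
  h_step : ∀ (ℓ : ℕ) (n : ℤ),
    h (ℓ + 1) n = h ℓ (n - 1) + β n * (g (ℓ + 1) n + g (ℓ + 1) (n - 1))

/-- There is a summation constant `c₁,₊` such that
`g_{1,+} = −c₀,₊ α⁺β + c₁,₊/2`, `f_{1,+} = c₀,₊(−γ⁺α⁺⁺ + (α⁺)²β) − c₁,₊ α⁺`, and
`h_{1,+} = c₀,₊(γβ⁻ − α⁺β²) + c₁,₊ β`, where `γ = 1 − αβ`. -/
theorem first_order_coefficients (α β : ℤ → ℂ) (c0p : ℂ) (f g h : ℕ → ℤ → ℂ)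
    (hrec : ALRecPlus α β c0p f g h) :
    ∃ c1p : ℂ, ∀ n : ℤ,
      g 1 n = -(c0p * α (n + 1) * β n) + c1p / 2
      ∧ f 1 n = c0p * (-((1 - α (n + 1) * β (n + 1)) * α (n + 2))
            + α (n + 1) ^ 2 * β n) - c1p * α (n + 1)
      ∧ h 1 n = c0p * ((1 - α n * β n) * β (n - 1) - α (n + 1) * β n ^ 2)
            + c1p * β n := by
  obtain ⟨g0, f0, h0, gs, fs, hs⟩ := hrec
  have key : ∀ n : ℤ, g 1 (n + 1) + c0p * α (n + 2) * β (n + 1)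
      = g 1 n + c0p * α (n + 1) * β n := by
    intro n
    have h1 := gs 0 (n + 1)
    rw [h0, f0, show n + 1 - 1 = n from by ring,
      show n + 1 + 1 = n + 2 from by ring] at h1
    linear_combination h1
  have const : ∀ n : ℤ, g 1 n + c0p * α (n + 1) * β n = g 1 0 + c0p * α 1 * β 0 := by
    intro n
    induction n using Int.induction_on with
    | zero => norm_num
    | succ k ih =>
      rw [show (k : ℤ) + 1 + 1 = (k : ℤ) + 2 from by ring, key k, ih]
    | pred k ih =>
      have h2 := key (-(k : ℤ) - 1)
      rw [show -(k : ℤ) - 1 + 1 = -(k : ℤ) from by ring,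
        show -(k : ℤ) - 1 + 2 = -(k : ℤ) + 1 from by ring] at h2
      rw [show -(k : ℤ) - 1 + 1 = -(k : ℤ) from by ring, ← h2, ih]
  refine ⟨2 * (g 1 0 + c0p * α 1 * β 0), fun n => ?_⟩
  have hg : ∀ m : ℤ, g 1 m = -(c0p * α (m + 1) * β m)
      + 2 * (g 1 0 + c0p * α 1 * β 0) / 2 := fun m => by linear_combination const m
  refine ⟨hg n, ?_, ?_⟩
  · have h1 := fs 0 (n + 1)
    rw [show n + 1 - 1 = n from by ring, f0, hg (n + 1), hg n] at h1
    rw [h1]; ring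
  · have h1 := hs 0 n
    rw [h0, hg n, hg (n - 1), show n - 1 + 1 = n from by ring] at h1
    rw [h1]; ring
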